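/- arXiv:2402.14017 — 2 statements merged into one kernel-verified Lean document; each statement's English description precedes it below -/
import Mathlib

section
/- Under an affine Gaussian probability path with marginal p_t(x) = ∫ N(x|α_t x₁, σ_t² I) q(x₁) dx₁ and posterior p_t(x₁|x) = N(x|α_t x₁, σ_t² I) q(x₁) / p_t(x), the gradient of the posterior in x satisfies ∇_x p_t(x₁|x) = p_t(x₁|x) · (α_t/σ_t²) · (x₁ − x̂₁), where x̂₁ = ∫ x₁ p_t(x₁|x) dx₁ is the posterior mean (the denoiser). -/
open Real MeasureTheory

/-- Gaussian density on `ℝ^d` with mean `μ` and covariance `σ² I`. -/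
noncomputable def gaussDensity (d : ℕ) (μ : EuclideanSpace ℝ (Fin d)) (σ : ℝ)
    (x : EuclideanSpace ℝ (Fin d)) : ℝ :=
  (2 * π * σ ^ 2) ^ (-(d : ℝ) / 2) * Real.exp (-‖x - μ‖ ^ 2 / (2 * σ ^ 2))

/-- The AGPP marginal density `p_t(x) = ∫ N(x|α_t x₁, σ_t² I) q(x₁) dx₁`. -/
noncomputable def marginal (d : ℕ) (αt σt : ℝ) (q : EuclideanSpace ℝ (Fin d) → ℝ)
    (x : EuclideanSpace ℝ (Fin d)) : ℝ :=
  ∫ x₁, gaussDensity d (αt • x₁) σt x * q x₁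

/-- The posterior density `p_t(x₁|x) = N(x|α_t x₁, σ_t² I) q(x₁) / p_t(x)`. -/
noncomputable def posterior (d : ℕ) (αt σt : ℝ) (q : EuclideanSpace ℝ (Fin d) → ℝ)
    (x₁ x : EuclideanSpace ℝ (Fin d)) : ℝ :=
  gaussDensity d (αt • x₁) σt x * q x₁ / marginal d αt σt q x

/-- The denoiser (posterior mean) `x̂₁(x) = ∫ x₁ p_t(x₁|x) dx₁`. -/
noncomputable def denoiser (d : ℕ) (αt σt : ℝ) (q : EuclideanSpace ℝ (Fin d) → ℝ)
    (x : EuclideanSpace ℝ (Fin d)) : EuclideanSpace ℝ (Fin d) :=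
  ∫ x₁, posterior d αt σt q x₁ x • x₁

section helpers

variable {V : Type*} [NormedAddCommGroup V] [InnerProductSpace ℝ V] [CompleteSpace V]

lemma toDual_smul_add' (a b : ℝ) (v w : V) :
    (InnerProductSpace.toDual ℝ V) (a • v + b • w)
      = a • (InnerProductSpace.toDual ℝ V) v + b • (InnerProductSpace.toDual ℝ V) w := by
  simp

lemma HasGradientAt.mul'' {f g : V → ℝ} {f' g' : V} {x : V}
    (hf : HasGradientAt f f' x) (hg : HasGradientAt g g' x) :
    HasGradientAt (fun z => f z * g z) (f x • g' + g x • f') x := by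
  rw [hasGradientAt_iff_hasFDerivAt] at *
  have h := hf.mul hg
  rwa [← toDual_smul_add'] at h

lemma HasGradientAt.inv'' {g : V → ℝ} {g' : V} {x : V}
    (hg : HasGradientAt g g' x) (hx : g x ≠ 0) :
    HasGradientAt (fun z => (g z)⁻¹) ((-(g x ^ 2)⁻¹) • g') x := by
  rw [hasGradientAt_iff_hasFDerivAt] at *
  have h := (hasDerivAt_inv hx).comp_hasFDerivAt x hg
  rw [_root_.map_smul]
  exact h

lemma gauss_grad {d : ℕ} {σt : ℝ} (hσ : 0 < σt) (μ x : EuclideanSpace ℝ (Fin d)) :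
    HasGradientAt (fun z => gaussDensity d μ σt z)
      (((σt ^ 2)⁻¹ * gaussDensity d μ σt x) • (μ - x)) x := by
  have hns : HasFDerivAt (fun z : EuclideanSpace ℝ (Fin d) => ‖z - μ‖ ^ 2)
      (2 • innerSL ℝ (x - μ)) x := by
    simpa using ((hasFDerivAt_id x).sub_const μ).norm_sq
  have hA : HasFDerivAt (fun z : EuclideanSpace ℝ (Fin d) => -‖z - μ‖ ^ 2 / (2 * σt ^ 2))
      ((-(2 * σt ^ 2)⁻¹) • (2 • innerSL ℝ (x - μ))) x := by
    have := hns.const_smul (-(2 * σt ^ 2)⁻¹)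
    refine this.congr_of_eventuallyEq (Filter.Eventually.of_forall fun z => ?_)
    simp [smul_eq_mul]
    ring
  have hE := hA.exp
  have hg := hE.const_mul ((2 * π * σt ^ 2) ^ (-(d : ℝ) / 2))
  rw [hasGradientAt_iff_hasFDerivAt]
  unfold gaussDensity
  refine hg.congr_fderiv ?_
  symm
  apply ContinuousLinearMap.ext
  intro y
  have hσ2 : σt ^ 2 ≠ 0 := by positivity
  simp [InnerProductSpace.toDual_apply_apply, real_inner_smul_left, inner_sub_left, smul_eq_mul]
  ring

end helpers

/-- Gradient of the posterior: `∇_x p_t(x₁|x) = p_t(x₁|x) (α_t/σ_t²) (x₁ − x̂₁)`,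
assuming `q` is a probability density, `p_t(x) > 0`, and differentiation under the
integral sign is valid for the marginal. -/
theorem gradient_posterior (d : ℕ) (αt σt : ℝ) (hα : 0 < αt) (hσ : 0 < σt)
    (q : EuclideanSpace ℝ (Fin d) → ℝ) (hq_nonneg : ∀ x₁, 0 ≤ q x₁)
    (hq_prob : ∫ x₁ : EuclideanSpace ℝ (Fin d), q x₁ = 1)
    (x₁ x : EuclideanSpace ℝ (Fin d))
    (hpos : 0 < marginal d αt σt q x)
    (hswap : HasGradientAt (marginal d αt σt q)
      (∫ y₁, ((σt ^ 2)⁻¹ * (gaussDensity d (αt • y₁) σt x * q y₁)) • (αt • y₁ - x)) x) :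
    HasGradientAt (fun z => posterior d αt σt q x₁ z)
      ((posterior d αt σt q x₁ x * (αt / σt ^ 2)) • (x₁ - denoiser d αt σt q x)) x := by
  set c : ℝ := (2 * π * σt ^ 2) ^ (-(d : ℝ) / 2) with hc_def
  have hc : 0 < c := by
    apply Real.rpow_pos_of_pos
    positivity
  set f : EuclideanSpace ℝ (Fin d) → ℝ := fun y => gaussDensity d (αt • y) σt x * q y
    with hf_def
  have hf_nonneg : ∀ y, 0 ≤ f y := by
    intro y
    have h0 : 0 < gaussDensity d (αt • y) σt x := by
      unfold gaussDensity
      positivity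
    exact mul_nonneg h0.le (hq_nonneg y)
  set m : ℝ := marginal d αt σt q x with hm_def
  have hm_ne : m ≠ 0 := ne_of_gt hpos
  have hq_int : Integrable q := by
    by_contra h
    rw [integral_undef h] at hq_prob
    exact one_ne_zero hq_prob.symm
  have hf_int : Integrable f := by
    by_contra h
    exact hm_ne (integral_undef h)
  have hF_int : Integrable (fun y : EuclideanSpace ℝ (Fin d) => f y • y) := by
    apply Integrable.mono' (hq_int.const_mul (c * (σt + ‖x‖) / αt))
    · exact hf_int.aestronglyMeasurable.smul aestronglyMeasurable_id
    · filter_upwards with y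
      rw [norm_smul, Real.norm_eq_abs, abs_of_nonneg (hf_nonneg y)]
      set u : ℝ := ‖x - αt • y‖ with hu_def
      have hu : 0 ≤ u := norm_nonneg _
      have hE0 : 0 ≤ Real.exp (-u ^ 2 / (2 * σt ^ 2)) := (Real.exp_pos _).le
      have hneg : -u ^ 2 / (2 * σt ^ 2) ≤ 0 := by
        rw [neg_div]
        exact neg_nonpos.mpr (by positivity)
      have hE1 : Real.exp (-u ^ 2 / (2 * σt ^ 2)) ≤ 1 := by
        rw [show (1 : ℝ) = Real.exp 0 by simp]
        exact Real.exp_le_exp.mpr hneg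
      have hEu : Real.exp (-u ^ 2 / (2 * σt ^ 2)) * u ≤ σt := by
        have key : u ≤ σt * Real.exp (u ^ 2 / (2 * σt ^ 2)) := by
          have h2 := Real.add_one_le_exp (u ^ 2 / (2 * σt ^ 2))
          have h3 : σt * (u ^ 2 / (2 * σt ^ 2) + 1) ≤ σt * Real.exp (u ^ 2 / (2 * σt ^ 2)) :=
            mul_le_mul_of_nonneg_left h2 hσ.le
          refine le_trans ?_ h3
          have hx2 : u ^ 2 / (2 * σt ^ 2) * (2 * σt ^ 2) = u ^ 2 :=
            div_mul_cancel₀ _ (by positivity)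
          nlinarith [sq_nonneg (u - σt), hσ, hx2]
        rw [neg_div, Real.exp_neg, inv_mul_le_iff₀ (Real.exp_pos _)]
        rw [mul_comm] at key
        exact key
      have hy : αt * ‖y‖ ≤ u + ‖x‖ := by
        have h1 : αt * ‖y‖ = ‖αt • y‖ := by
          rw [norm_smul, Real.norm_eq_abs, abs_of_pos hα]
        have h2 : ‖αt • y‖ = ‖(αt • y - x) + x‖ := by rw [sub_add_cancel]
        have h3 : ‖(αt • y - x) + x‖ ≤ ‖αt • y - x‖ + ‖x‖ := norm_add_le _ _
        have h4 : ‖αt • y - x‖ = u := by rw [hu_def, norm_sub_rev]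
        rw [h1, h2]
        rw [h4] at h3
        exact h3
      have hfy : f y = c * Real.exp (-u ^ 2 / (2 * σt ^ 2)) * q y := rfl
      rw [hfy, div_mul_eq_mul_div, le_div_iff₀ hα]
      have hqy := hq_nonneg y
      nlinarith [mul_le_mul_of_nonneg_left hy
          (mul_nonneg (mul_nonneg hc.le hE0) hqy),
        mul_le_mul_of_nonneg_left hEu (mul_nonneg hc.le hqy),
        mul_le_mul_of_nonneg_left hE1
          (mul_nonneg (mul_nonneg hc.le hqy) (norm_nonneg x))]
  set I : EuclideanSpace ℝ (Fin d) := ∫ y, f y • y with hI_def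
  have hV : (∫ y₁, ((σt ^ 2)⁻¹ * (gaussDensity d (αt • y₁) σt x * q y₁)) • (αt • y₁ - x))
      = (σt ^ 2)⁻¹ • (αt • I - m • x) := by
    have hpt : ∀ y : EuclideanSpace ℝ (Fin d), ((σt ^ 2)⁻¹ * f y) • (αt • y - x)
        = (σt ^ 2)⁻¹ • (αt • (f y • y) - f y • x) := by
      intro y
      module
    have h1 : Integrable (fun y : EuclideanSpace ℝ (Fin d) => αt • (f y • y)) :=
      (hF_int.smul αt : Integrable (αt • fun y : EuclideanSpace ℝ (Fin d) => f y • y))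
    have h2 : Integrable (fun y : EuclideanSpace ℝ (Fin d) => f y • x) :=
      hf_int.smul_const x
    calc (∫ y₁, ((σt ^ 2)⁻¹ * f y₁) • (αt • y₁ - x))
        = ∫ y₁, (σt ^ 2)⁻¹ • (αt • (f y₁ • y₁) - f y₁ • x) := by simp_rw [hpt]
      _ = (σt ^ 2)⁻¹ • ((∫ y₁, αt • (f y₁ • y₁)) - ∫ y₁, f y₁ • x) := by
          rw [integral_smul, integral_sub h1 h2]
      _ = (σt ^ 2)⁻¹ • (αt • I - m • x) := by
          rw [integral_smul, integral_smul_const]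
          rfl
  have hden : denoiser d αt σt q x = m⁻¹ • I := by
    unfold denoiser
    have hpt : ∀ y : EuclideanSpace ℝ (Fin d),
        posterior d αt σt q y x • y = m⁻¹ • (f y • y) := by
      intro y
      unfold posterior
      rw [div_eq_inv_mul, ← smul_smul]
    simp_rw [hpt]
    rw [integral_smul]
  set G : ℝ := gaussDensity d (αt • x₁) σt x with hG_def
  have hgq : HasGradientAt (fun z => gaussDensity d (αt • x₁) σt z * q x₁)
      ((q x₁) • (((σt ^ 2)⁻¹ * G) • (αt • x₁ - x))) x := by
    have h := (gauss_grad hσ (αt • x₁) x).mul'' (hasGradientAt_const x (q x₁))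
    simpa using h
  have hminv : HasGradientAt (fun z => (marginal d αt σt q z)⁻¹)
      ((-(m ^ 2)⁻¹) • ((σt ^ 2)⁻¹ • (αt • I - m • x))) x := by
    have h := hswap.inv'' hm_ne
    rw [hV] at h
    exact h
  have htot := hgq.mul'' hminv
  have heq : (fun z => posterior d αt σt q x₁ z)
      = fun z => (gaussDensity d (αt • x₁) σt z * q x₁) * (marginal d αt σt q z)⁻¹ := by
    funext z
    unfold posterior
    rw [div_eq_mul_inv]
  rw [heq, hden]
  convert htot using 1
  have hpost : posterior d αt σt q x₁ x = G * q x₁ / m := rfl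
  rw [hpost]
  have hσ2 : (σt : ℝ) ^ 2 ≠ 0 := by positivity
  match_scalars
  all_goals (simp only [← hm_def, ← hG_def]; field_simp; try ring; try tauto)
end

section
/- The Jacobian (differential in x) of the denoiser x̂₁(x) = ∫ x₁ p_t(x₁|x) dx₁ equals (α_t/σ_t²) · Var(x₁|x), where Var(x₁|x) = ∫ (x₁ − x̂₁)(x₁ − x̂₁)ᵀ p_t(x₁|x) dx₁ is the posterior covariance matrix. In particular, the denoiser Jacobian is symmetric positive semidefinite. -/
set_option maxHeartbeats 1000000

open Real MeasureTheory
open scoped RealInnerProductSpace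

section helpers
variable {d : ℕ} {σ : ℝ} {μ x : EuclideanSpace ℝ (Fin d)}

lemma self_le_exp_half_sq (s : ℝ) : s ≤ Real.exp (s ^ 2 / 2) := by
  have h1 : s ≤ 1 + s ^ 2 / 2 := by nlinarith [sq_nonneg (s - 1)]
  have h2 := Real.add_one_le_exp (s ^ 2 / 2)
  linarith

lemma gaussDensity_pos (hσ : 0 < σ) : 0 < gaussDensity d μ σ x := by
  unfold gaussDensity
  have h2 : (0:ℝ) < 2 * π * σ ^ 2 := by positivity
  positivity

lemma gaussDensity_le (hσ : 0 < σ) :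
    gaussDensity d μ σ x ≤ (2 * π * σ ^ 2) ^ (-(d : ℝ) / 2) := by
  unfold gaussDensity
  have h2 : (0:ℝ) < 2 * π * σ ^ 2 := by positivity
  have h3 : Real.exp (-‖x - μ‖ ^ 2 / (2 * σ ^ 2)) ≤ 1 := by
    rw [Real.exp_le_one_iff]
    have : (0:ℝ) ≤ ‖x - μ‖ ^ 2 / (2 * σ ^ 2) := by positivity
    rw [neg_div]; linarith
  have h4 : (0:ℝ) ≤ (2 * π * σ ^ 2) ^ (-(d : ℝ) / 2) := by positivity
  nlinarith

lemma gaussDensity_mul_norm_le (hσ : 0 < σ) :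
    gaussDensity d μ σ x * ‖x - μ‖ ≤ (2 * π * σ ^ 2) ^ (-(d : ℝ) / 2) * σ := by
  set t := ‖x - μ‖ with ht
  set c := (2 * π * σ ^ 2) ^ (-(d : ℝ) / 2) with hc
  have hcpos : (0:ℝ) < c := by rw [hc]; positivity
  have key : t * Real.exp (-t ^ 2 / (2 * σ ^ 2)) ≤ σ := by
    have hs := self_le_exp_half_sq (t / σ)
    have he : (t / σ) ^ 2 / 2 = t ^ 2 / (2 * σ ^ 2) := by
      rw [div_pow, div_div, mul_comm]
    rw [he] at hs
    have hE : (0:ℝ) < Real.exp (t ^ 2 / (2 * σ ^ 2)) := Real.exp_pos _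
    have h1 : t ≤ σ * Real.exp (t ^ 2 / (2 * σ ^ 2)) := by
      rw [div_le_iff₀ hσ] at hs; linarith [hs]
    rw [neg_div, Real.exp_neg]
    have h2 := mul_le_mul_of_nonneg_right h1 (inv_nonneg.2 hE.le)
    calc t * (Real.exp (t ^ 2 / (2 * σ ^ 2)))⁻¹
        ≤ σ * Real.exp (t ^ 2 / (2 * σ ^ 2)) * (Real.exp (t ^ 2 / (2 * σ ^ 2)))⁻¹ := h2
      _ = σ := by field_simp
  unfold gaussDensity
  rw [← ht, ← hc]
  nlinarith [key, hcpos.le, Real.exp_pos (-t ^ 2 / (2 * σ ^ 2))]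

lemma gaussDensity_mul_sq_norm_le (hσ : 0 < σ) :
    gaussDensity d μ σ x * ‖x - μ‖ ^ 2 ≤ (2 * π * σ ^ 2) ^ (-(d : ℝ) / 2) * (2 * σ ^ 2) := by
  set t := ‖x - μ‖ with ht
  set c := (2 * π * σ ^ 2) ^ (-(d : ℝ) / 2) with hc
  have hcpos : (0:ℝ) < c := by rw [hc]; positivity
  have key : t ^ 2 * Real.exp (-t ^ 2 / (2 * σ ^ 2)) ≤ 2 * σ ^ 2 := by
    set u := t ^ 2 / (2 * σ ^ 2) with hu
    have hu0 : (0:ℝ) ≤ u := by rw [hu]; positivity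
    have hs : u ≤ Real.exp u := by linarith [Real.add_one_le_exp u]
    have hE : (0:ℝ) < Real.exp u := Real.exp_pos _
    have h1 : t ^ 2 ≤ 2 * σ ^ 2 * Real.exp u := by
      have : t ^ 2 = 2 * σ ^ 2 * u := by rw [hu]; field_simp
      rw [this]
      have h2σ : (0:ℝ) ≤ 2 * σ ^ 2 := by positivity
      nlinarith
    rw [neg_div, ← hu, Real.exp_neg]
    have h2 := mul_le_mul_of_nonneg_right h1 (inv_nonneg.2 hE.le)
    calc t ^ 2 * (Real.exp u)⁻¹ ≤ 2 * σ ^ 2 * Real.exp u * (Real.exp u)⁻¹ := h2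
      _ = 2 * σ ^ 2 := by field_simp
  unfold gaussDensity
  rw [← ht, ← hc]
  nlinarith [key, hcpos.le, Real.exp_pos (-t ^ 2 / (2 * σ ^ 2))]

end helpers

section deriv
variable {d : ℕ} {σ : ℝ} (μ x : EuclideanSpace ℝ (Fin d))

lemma gaussDensity_hasFDerivAt (hσ : σ ≠ 0) :
    HasFDerivAt (gaussDensity d μ σ)
      (innerSL ℝ ((gaussDensity d μ σ x / σ ^ 2) • (μ - x))) x := by
  have hsub : HasFDerivAt (fun z : EuclideanSpace ℝ (Fin d) => z - μ)
      (ContinuousLinearMap.id ℝ (EuclideanSpace ℝ (Fin d))) x := (hasFDerivAt_id x).sub_const μ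
  have hin := hsub.inner ℝ hsub
  have h1 : HasFDerivAt (fun z : EuclideanSpace ℝ (Fin d) => -‖z - μ‖ ^ 2 / (2 * σ ^ 2))
      ((-(2 * σ ^ 2)⁻¹) • ((fderivInnerCLM ℝ (x - μ, x - μ)).comp
        ((ContinuousLinearMap.id ℝ (EuclideanSpace ℝ (Fin d))).prod
          (ContinuousLinearMap.id ℝ (EuclideanSpace ℝ (Fin d)))))) x := by
    have heq : (fun z : EuclideanSpace ℝ (Fin d) => -‖z - μ‖ ^ 2 / (2 * σ ^ 2))
        = fun z : EuclideanSpace ℝ (Fin d) => (-(2 * σ ^ 2)⁻¹) * ⟪z - μ, z - μ⟫ := by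
      funext z
      rw [real_inner_self_eq_norm_sq]
      field_simp
    rw [heq]
    exact hin.const_mul _
  have h2 := h1.exp
  have h3 := h2.const_mul ((2 * π * σ ^ 2) ^ (-(d : ℝ) / 2))
  have hfun : gaussDensity d μ σ = fun z : EuclideanSpace ℝ (Fin d) =>
      (2 * π * σ ^ 2) ^ (-(d : ℝ) / 2) * Real.exp (-‖z - μ‖ ^ 2 / (2 * σ ^ 2)) := rfl
  rw [hfun]
  refine h3.congr_fderiv (Eq.symm ?_)
  ext v
  simp only [innerSL_apply_apply, ContinuousLinearMap.coe_smul', Pi.smul_apply,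
    fderivInnerCLM_apply, ContinuousLinearMap.coe_comp', Function.comp_apply,
    ContinuousLinearMap.prod_apply, ContinuousLinearMap.coe_id', id_eq, smul_eq_mul]
  have hmx : ⟪(gaussDensity d μ σ x / σ ^ 2) • (μ - x), v⟫
      = (gaussDensity d μ σ x / σ ^ 2) * ⟪μ - x, v⟫ := real_inner_smul_left _ _ _
  have hneg : ⟪μ - x, v⟫ = -⟪x - μ, v⟫ := by rw [← inner_neg_left, neg_sub]
  have hcomm : ⟪v, x - μ⟫ = ⟪x - μ, v⟫ := real_inner_comm _ _
  rw [real_inner_smul_left, hneg, hcomm]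
  have hσ2 : σ ^ 2 ≠ 0 := pow_ne_zero 2 hσ
  field_simp
  ring
end deriv

/-- The Jacobian of the denoiser equals `(α_t/σ_t²) · Var(x₁|x)`, where `Var(x₁|x)`
is the posterior covariance; in particular it is symmetric positive semidefinite. -/
theorem denoiser_jacobian_eq_covariance (d : ℕ) (αt σt : ℝ) (hα : 0 < αt) (hσ : 0 < σt)
    (q : EuclideanSpace ℝ (Fin d) → ℝ) (hq_nonneg : ∀ x₁, 0 ≤ q x₁)
    (hq_prob : ∫ x₁ : EuclideanSpace ℝ (Fin d), q x₁ = 1)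
    (x : EuclideanSpace ℝ (Fin d)) (hpos : 0 < marginal d αt σt q x)
    (hdiff : DifferentiableAt ℝ (denoiser d αt σt q) x)
    -- differentiation under the integral sign is valid for the denoiser:
    (hswap : ∀ v : EuclideanSpace ℝ (Fin d),
      fderiv ℝ (denoiser d αt σt q) x v =
        ∫ x₁, ⟪gradient (fun z => posterior d αt σt q x₁ z) x, v⟫ • x₁) :
    (∀ v : EuclideanSpace ℝ (Fin d),
        fderiv ℝ (denoiser d αt σt q) x v =
          (αt / σt ^ 2) •
            ∫ x₁, (posterior d αt σt q x₁ x * ⟪x₁ - denoiser d αt σt q x, v⟫) •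
              (x₁ - denoiser d αt σt q x)) ∧
    (∀ v w : EuclideanSpace ℝ (Fin d),
        ⟪fderiv ℝ (denoiser d αt σt q) x v, w⟫ = ⟪v, fderiv ℝ (denoiser d αt σt q) x w⟫) ∧
    (∀ v : EuclideanSpace ℝ (Fin d), 0 ≤ ⟪fderiv ℝ (denoiser d αt σt q) x v, v⟫) := by
  have hσ2 : (0:ℝ) < σt ^ 2 := by positivity
  have hmne : marginal d αt σt q x ≠ 0 := ne_of_gt hpos
  have hq_int : Integrable q := by
    by_contra h
    rw [integral_undef h] at hq_prob
    exact one_ne_zero hq_prob.symm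
  have hgc : ∀ z : EuclideanSpace ℝ (Fin d),
      Continuous fun x₁ : EuclideanSpace ℝ (Fin d) => gaussDensity d (αt • x₁) σt z := by
    intro z
    unfold gaussDensity
    fun_prop
  have hgq_meas : ∀ z : EuclideanSpace ℝ (Fin d),
      AEStronglyMeasurable
        (fun x₁ : EuclideanSpace ℝ (Fin d) => gaussDensity d (αt • x₁) σt z * q x₁) volume :=
    fun z => ((hgc z).aestronglyMeasurable).mul hq_int.1
  have I0 : Integrable fun x₁ : EuclideanSpace ℝ (Fin d) =>
      gaussDensity d (αt • x₁) σt x * q x₁ := by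
    by_contra h
    unfold marginal at hpos
    rw [integral_undef h] at hpos
    exact lt_irrefl 0 hpos
  set C := (2 * π * σt ^ 2) ^ (-(d : ℝ) / 2) with hC
  have hCpos : (0:ℝ) < C := by rw [hC]; positivity
  have hb0 : ∀ (z x₁ : EuclideanSpace ℝ (Fin d)), gaussDensity d (αt • x₁) σt z ≤ C :=
    fun z x₁ => gaussDensity_le hσ
  have hb1 : ∀ (z x₁ : EuclideanSpace ℝ (Fin d)),
      gaussDensity d (αt • x₁) σt z * ‖z - αt • x₁‖ ≤ C * σt :=
    fun z x₁ => gaussDensity_mul_norm_le hσ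
  have hb2 : ∀ (z x₁ : EuclideanSpace ℝ (Fin d)),
      gaussDensity d (αt • x₁) σt z * ‖z - αt • x₁‖ ^ 2 ≤ C * (2 * σt ^ 2) :=
    fun z x₁ => gaussDensity_mul_sq_norm_le hσ
  have hgpos : ∀ (z x₁ : EuclideanSpace ℝ (Fin d)), 0 < gaussDensity d (αt • x₁) σt z :=
    fun z x₁ => gaussDensity_pos hσ
  have hnrm : ∀ x₁ : EuclideanSpace ℝ (Fin d), αt * ‖x₁‖ ≤ ‖x - αt • x₁‖ + ‖x‖ := by
    intro x₁
    have h1 : ‖αt • x₁‖ ≤ ‖αt • x₁ - x‖ + ‖x‖ := by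
      calc ‖αt • x₁‖ = ‖(αt • x₁ - x) + x‖ := by rw [sub_add_cancel]
        _ ≤ ‖αt • x₁ - x‖ + ‖x‖ := norm_add_le _ _
    rw [norm_smul, Real.norm_eq_abs, abs_of_pos hα] at h1
    rw [norm_sub_rev] at h1
    exact h1
  have hb1' : ∀ x₁ : EuclideanSpace ℝ (Fin d),
      gaussDensity d (αt • x₁) σt x * ‖x₁‖ ≤ (C * σt + C * ‖x‖) / αt := by
    intro x₁
    rw [le_div_iff₀ hα]
    have h2 := mul_le_mul_of_nonneg_left (hnrm x₁) (hgpos x x₁).le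
    nlinarith [hb0 x x₁, hb1 x x₁, norm_nonneg x, (hgpos x x₁).le]
  have hb2' : ∀ x₁ : EuclideanSpace ℝ (Fin d),
      gaussDensity d (αt • x₁) σt x * ‖x₁‖ ^ 2 ≤ (4 * C * σt ^ 2 + 2 * C * ‖x‖ ^ 2) / αt ^ 2 := by
    intro x₁
    rw [le_div_iff₀ (by positivity : (0:ℝ) < αt ^ 2)]
    have h1 : (αt * ‖x₁‖) ^ 2 ≤ (‖x - αt • x₁‖ + ‖x‖) ^ 2 :=
      pow_le_pow_left₀ (by positivity) (hnrm x₁) 2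
    have h2 : (‖x - αt • x₁‖ + ‖x‖) ^ 2 ≤ 2 * ‖x - αt • x₁‖ ^ 2 + 2 * ‖x‖ ^ 2 := by
      nlinarith [sq_nonneg (‖x - αt • x₁‖ - ‖x‖)]
    have h3 := mul_le_mul_of_nonneg_left (h1.trans h2) (hgpos x x₁).le
    have h4 := mul_le_mul_of_nonneg_right (hb0 x x₁) (sq_nonneg ‖x‖)
    nlinarith [hb2 x x₁]
  -- scalar integrability of moments
  have A1 : Integrable fun x₁ : EuclideanSpace ℝ (Fin d) =>
      gaussDensity d (αt • x₁) σt x * q x₁ * ‖x₁‖ := by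
    refine Integrable.mono' (hq_int.const_mul ((C * σt + C * ‖x‖) / αt))
      ((hgq_meas x).mul continuous_norm.aestronglyMeasurable) ?_
    filter_upwards with x₁
    have h0 : 0 ≤ gaussDensity d (αt • x₁) σt x * q x₁ * ‖x₁‖ := by
      have := (hgpos x x₁).le
      have := hq_nonneg x₁
      positivity
    rw [Real.norm_eq_abs, abs_of_nonneg h0]
    nlinarith [mul_le_mul_of_nonneg_right (hb1' x₁) (hq_nonneg x₁)]
  have A2 : Integrable fun x₁ : EuclideanSpace ℝ (Fin d) =>
      gaussDensity d (αt • x₁) σt x * q x₁ * ‖x₁‖ ^ 2 := by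
    refine Integrable.mono' (hq_int.const_mul ((4 * C * σt ^ 2 + 2 * C * ‖x‖ ^ 2) / αt ^ 2))
      ((hgq_meas x).mul (continuous_norm.pow 2).aestronglyMeasurable) ?_
    filter_upwards with x₁
    have h0 : 0 ≤ gaussDensity d (αt • x₁) σt x * q x₁ * ‖x₁‖ ^ 2 := by
      have := (hgpos x x₁).le
      have := hq_nonneg x₁
      positivity
    rw [Real.norm_eq_abs, abs_of_nonneg h0]
    nlinarith [mul_le_mul_of_nonneg_right (hb2' x₁) (hq_nonneg x₁)]
  have V1 : Integrable fun x₁ : EuclideanSpace ℝ (Fin d) =>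
      (gaussDensity d (αt • x₁) σt x * q x₁) • x₁ := by
    refine Integrable.mono' A1 ((hgq_meas x).smul aestronglyMeasurable_id) ?_
    filter_upwards with x₁
    rw [norm_smul, Real.norm_eq_abs,
      abs_of_nonneg (mul_nonneg (hgpos x x₁).le (hq_nonneg x₁))]
  have V2 : Integrable fun x₁ : EuclideanSpace ℝ (Fin d) =>
      (gaussDensity d (αt • x₁) σt x * q x₁) • (αt • x₁ - x) := by
    refine Integrable.mono' (hq_int.const_mul (C * σt))
      ((hgq_meas x).smul (by fun_prop : Continuous fun x₁ : EuclideanSpace ℝ (Fin d) =>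
        αt • x₁ - x).aestronglyMeasurable) ?_
    filter_upwards with x₁
    rw [norm_smul, Real.norm_eq_abs,
      abs_of_nonneg (mul_nonneg (hgpos x x₁).le (hq_nonneg x₁)), norm_sub_rev]
    nlinarith [mul_le_mul_of_nonneg_right (hb1 x x₁) (hq_nonneg x₁), hb1 x x₁,
      norm_nonneg (x - αt • x₁), (hgpos x x₁).le, hq_nonneg x₁]
  have hFz : ∀ (z x₁ : EuclideanSpace ℝ (Fin d)),
      HasFDerivAt (fun z' => gaussDensity d (αt • x₁) σt z' * q x₁)
        (innerSL ℝ ((σt ^ 2)⁻¹ •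
          ((gaussDensity d (αt • x₁) σt z * q x₁) • (αt • x₁ - z)))) z := by
    intro z x₁
    have h := (gaussDensity_hasFDerivAt (αt • x₁) z (ne_of_gt hσ)).mul_const (q x₁)
    refine h.congr_fderiv (Eq.symm ?_)
    rw [← _root_.map_smul]
    congr 1
    rw [smul_smul, smul_smul]
    congr 1
    ring
  have hboundint : Integrable fun x₁ : EuclideanSpace ℝ (Fin d) => C / σt * q x₁ :=
    hq_int.const_mul _
  have hM0 : HasFDerivAt (fun z => marginal d αt σt q z)
      (∫ x₁, innerSL ℝ ((σt ^ 2)⁻¹ •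
        ((gaussDensity d (αt • x₁) σt x * q x₁) • (αt • x₁ - x)))) x := by
    have hmeq : (fun z => marginal d αt σt q z)
        = fun z => ∫ x₁, gaussDensity d (αt • x₁) σt z * q x₁ := rfl
    rw [hmeq]
    refine hasFDerivAt_integral_of_dominated_of_fderiv_le
      (F := fun z x₁ => gaussDensity d (αt • x₁) σt z * q x₁)
      (F' := fun z x₁ => innerSL ℝ ((σt ^ 2)⁻¹ •
        ((gaussDensity d (αt • x₁) σt z * q x₁) • (αt • x₁ - z))))
      (bound := fun x₁ => C / σt * q x₁) Filter.univ_mem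
      (Filter.Eventually.of_forall fun z => hgq_meas z) I0 ?_ ?_ hboundint ?_
    · exact (innerSL ℝ).continuous.comp_aestronglyMeasurable
        (((hgq_meas x).smul
          ((by fun_prop : Continuous fun x₁ : EuclideanSpace ℝ (Fin d) =>
            αt • x₁ - x).aestronglyMeasurable)).const_smul ((σt ^ 2)⁻¹ : ℝ))
    · filter_upwards with x₁
      intro z hz
      rw [innerSL_apply_norm, norm_smul, norm_smul, Real.norm_eq_abs, Real.norm_eq_abs,
        abs_of_nonneg (inv_nonneg.2 hσ2.le),
        abs_of_nonneg (mul_nonneg (hgpos z x₁).le (hq_nonneg x₁)), norm_sub_rev]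
      have h1 := mul_le_mul_of_nonneg_right (hb1 z x₁) (hq_nonneg x₁)
      have h2 : gaussDensity d (αt • x₁) σt z * q x₁ * ‖z - αt • x₁‖
          ≤ C * σt * q x₁ := by
        nlinarith [hb1 z x₁, hq_nonneg x₁, norm_nonneg (z - αt • x₁), (hgpos z x₁).le]
      have h3 : (σt ^ 2)⁻¹ * (C * σt * q x₁) = C / σt * q x₁ := by
        field_simp
      linarith [mul_le_mul_of_nonneg_left h2 (inv_nonneg.2 hσ2.le)]
    · filter_upwards with x₁
      intro z hz
      exact hFz z x₁
  have hden : denoiser d αt σt q x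
      = (marginal d αt σt q x)⁻¹ • ∫ x₁, (gaussDensity d (αt • x₁) σt x * q x₁) • x₁ := by
    unfold denoiser
    rw [← integral_smul]
    congr 1
    funext x₁
    simp only [posterior]
    rw [div_eq_inv_mul, mul_smul]
  have hDx : (∫ x₁, (gaussDensity d (αt • x₁) σt x * q x₁) • x₁)
      = marginal d αt σt q x • denoiser d αt σt q x := by
    rw [hden, smul_smul, mul_inv_cancel₀ hmne, one_smul]
  have hP1 : (∫ x₁, posterior d αt σt q x₁ x) = 1 := by
    simp only [posterior, div_eq_inv_mul]
    rw [integral_const_mul]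
    have : (∫ x₁, gaussDensity d (αt • x₁) σt x * q x₁) = marginal d αt σt q x := rfl
    rw [this, inv_mul_cancel₀ hmne]
  have Wint : Integrable fun x₁ : EuclideanSpace ℝ (Fin d) =>
      (σt ^ 2)⁻¹ • ((gaussDensity d (αt • x₁) σt x * q x₁) • (αt • x₁ - x)) :=
    V2.smul ((σt ^ 2)⁻¹ : ℝ)
  have hM : HasFDerivAt (marginal d αt σt q)
      (innerSL ℝ ((σt ^ 2)⁻¹ • (αt • (marginal d αt σt q x • denoiser d αt σt q x)
        - marginal d αt σt q x • x))) x := by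
    have hcomm := (innerSL ℝ (E := EuclideanSpace ℝ (Fin d))).integral_comp_comm Wint
    have heq : (∫ x₁, innerSL ℝ ((σt ^ 2)⁻¹ •
          ((gaussDensity d (αt • x₁) σt x * q x₁) • (αt • x₁ - x))))
        = innerSL ℝ ((σt ^ 2)⁻¹ • (αt • (marginal d αt σt q x • denoiser d αt σt q x)
            - marginal d αt σt q x • x)) := by
      rw [hcomm]
      congr 1
      rw [integral_smul]
      congr 1
      have hsp : ∀ x₁ : EuclideanSpace ℝ (Fin d),
          (gaussDensity d (αt • x₁) σt x * q x₁) • (αt • x₁ - x)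
          = αt • ((gaussDensity d (αt • x₁) σt x * q x₁) • x₁)
            - (gaussDensity d (αt • x₁) σt x * q x₁) • x := by
        intro x₁
        rw [smul_sub, smul_comm]
      simp only [hsp]
      have V1s : Integrable (fun x₁ : EuclideanSpace ℝ (Fin d) =>
          αt • ((gaussDensity d (αt • x₁) σt x * q x₁) • x₁)) volume := by
        have h := V1.smul αt
        simpa [Pi.smul_def] using h
      rw [integral_sub V1s (I0.smul_const x), integral_smul, hDx,
        integral_smul_const]
      have : (∫ x₁, gaussDensity d (αt • x₁) σt x * q x₁) = marginal d αt σt q x := rfl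
      rw [this]
    exact heq ▸ hM0
  -- derivative of the posterior in z
  have hP : ∀ x₁ : EuclideanSpace ℝ (Fin d),
      HasFDerivAt (fun z => posterior d αt σt q x₁ z)
        (innerSL ℝ ((αt / σt ^ 2) •
          (posterior d αt σt q x₁ x • (x₁ - denoiser d αt σt q x)))) x := by
    intro x₁
    have hfun : (fun z => posterior d αt σt q x₁ z)
        = fun z => (gaussDensity d (αt • x₁) σt z * q x₁) * (marginal d αt σt q z)⁻¹ := by
      funext z
      simp only [posterior]
      rw [div_eq_mul_inv]
    have hinv : HasFDerivAt (fun z => (marginal d αt σt q z)⁻¹)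
        ((-(ContinuousLinearMap.mulLeftRight ℝ ℝ (marginal d αt σt q x)⁻¹
          (marginal d αt σt q x)⁻¹)).comp
          (innerSL ℝ ((σt ^ 2)⁻¹ • (αt • (marginal d αt σt q x • denoiser d αt σt q x)
            - marginal d αt σt q x • x)))) x :=
      (hasFDerivAt_inv' hmne).comp x hM
    have h := (hFz x x₁).mul hinv
    rw [hfun]
    refine h.congr_fderiv (Eq.symm ?_)
    ext v
    simp only [innerSL_apply_apply, ContinuousLinearMap.add_apply, ContinuousLinearMap.coe_smul',
      Pi.smul_apply, smul_eq_mul, ContinuousLinearMap.coe_comp', Function.comp_apply,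
      ContinuousLinearMap.neg_apply, ContinuousLinearMap.mulLeftRight_apply,
      real_inner_smul_left, inner_sub_left, posterior]
    field_simp
    ring
  have hgrad : ∀ x₁ : EuclideanSpace ℝ (Fin d),
      gradient (fun z => posterior d αt σt q x₁ z) x
        = (αt / σt ^ 2) • (posterior d αt σt q x₁ x • (x₁ - denoiser d αt σt q x)) := by
    intro x₁
    refine HasGradientAt.gradient ?_
    rw [hasGradientAt_iff_hasFDerivAt]
    exact hP x₁
  -- posterior nonnegativity and integrability
  have hpn : ∀ x₁, 0 ≤ posterior d αt σt q x₁ x := fun x₁ =>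
    div_nonneg (mul_nonneg (hgpos x x₁).le (hq_nonneg x₁)) hpos.le
  have hpeq : ∀ x₁, posterior d αt σt q x₁ x
      = (marginal d αt σt q x)⁻¹ * (gaussDensity d (αt • x₁) σt x * q x₁) := by
    intro x₁
    simp only [posterior]
    rw [div_eq_inv_mul]
  have hmi : (0:ℝ) ≤ (marginal d αt σt q x)⁻¹ := inv_nonneg.2 hpos.le
  have Jp : Integrable fun x₁ => posterior d αt σt q x₁ x := by
    simp only [hpeq]
    exact I0.const_mul _
  have Jpx : Integrable fun x₁ => posterior d αt σt q x₁ x • x₁ := by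
    have heq : (fun x₁ => posterior d αt σt q x₁ x • x₁)
        = fun x₁ => (marginal d αt σt q x)⁻¹ •
            ((gaussDensity d (αt • x₁) σt x * q x₁) • x₁) := by
      funext x₁
      rw [hpeq x₁, mul_smul]
    rw [heq]
    have h := V1.smul ((marginal d αt σt q x)⁻¹ : ℝ)
    simpa [Pi.smul_def] using h
  have Js1 : ∀ v : EuclideanSpace ℝ (Fin d),
      Integrable fun x₁ => posterior d αt σt q x₁ x * ⟪x₁, v⟫ := by
    intro v
    refine Integrable.mono' (A1.const_mul ((marginal d αt σt q x)⁻¹ * ‖v‖))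
      (Jp.1.mul (Continuous.aestronglyMeasurable
        ((continuous_id (X := EuclideanSpace ℝ (Fin d))).inner continuous_const))) ?_
    filter_upwards with x₁
    rw [Real.norm_eq_abs, abs_mul, abs_of_nonneg (hpn x₁), hpeq x₁]
    have h1 : |(⟪x₁, v⟫ : ℝ)| ≤ ‖x₁‖ * ‖v‖ := abs_real_inner_le_norm _ _
    have hgq0 : 0 ≤ gaussDensity d (αt • x₁) σt x * q x₁ :=
      mul_nonneg (hgpos x x₁).le (hq_nonneg x₁)
    nlinarith [mul_le_mul_of_nonneg_left h1 (mul_nonneg hmi hgq0)]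
  have Js2 : ∀ v : EuclideanSpace ℝ (Fin d),
      Integrable fun x₁ => posterior d αt σt q x₁ x * ⟪denoiser d αt σt q x, v⟫ :=
    fun v => Jp.mul_const _
  have Ja : ∀ v : EuclideanSpace ℝ (Fin d),
      Integrable fun x₁ => posterior d αt σt q x₁ x * ⟪x₁ - denoiser d αt σt q x, v⟫ := by
    intro v
    have heq : (fun x₁ => posterior d αt σt q x₁ x * ⟪x₁ - denoiser d αt σt q x, v⟫)
        = fun x₁ => posterior d αt σt q x₁ x * ⟪x₁, v⟫
            - posterior d αt σt q x₁ x * ⟪denoiser d αt σt q x, v⟫ := by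
      funext x₁
      rw [inner_sub_left]
      ring
    rw [heq]
    exact (Js1 v).sub (Js2 v)
  have J1 : ∀ v : EuclideanSpace ℝ (Fin d),
      Integrable fun x₁ =>
        (posterior d αt σt q x₁ x * ⟪x₁ - denoiser d αt σt q x, v⟫) • x₁ := by
    intro v
    refine Integrable.mono'
      ((A2.const_mul ((marginal d αt σt q x)⁻¹ * ‖v‖)).add
        (A1.const_mul ((marginal d αt σt q x)⁻¹ * ‖v‖ * ‖denoiser d αt σt q x‖)))
      ((Ja v).1.smul aestronglyMeasurable_id) ?_
    filter_upwards with x₁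
    rw [norm_smul, Real.norm_eq_abs, abs_mul, abs_of_nonneg (hpn x₁), hpeq x₁]
    have h1 : |(⟪x₁ - denoiser d αt σt q x, v⟫ : ℝ)|
        ≤ (‖x₁‖ + ‖denoiser d αt σt q x‖) * ‖v‖ := by
      have h2 : |(⟪x₁ - denoiser d αt σt q x, v⟫ : ℝ)|
          ≤ ‖x₁ - denoiser d αt σt q x‖ * ‖v‖ := abs_real_inner_le_norm _ _
      have h3 := norm_sub_le x₁ (denoiser d αt σt q x)
      nlinarith [norm_nonneg v]
    have hgq0 : 0 ≤ gaussDensity d (αt • x₁) σt x * q x₁ :=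
      mul_nonneg (hgpos x x₁).le (hq_nonneg x₁)
    have c0 : (0:ℝ) ≤ (marginal d αt σt q x)⁻¹ * (gaussDensity d (αt • x₁) σt x * q x₁) * ‖x₁‖ :=
      mul_nonneg (mul_nonneg hmi hgq0) (norm_nonneg x₁)
    calc (marginal d αt σt q x)⁻¹ * (gaussDensity d (αt • x₁) σt x * q x₁) *
          |(⟪x₁ - denoiser d αt σt q x, v⟫ : ℝ)| * ‖x₁‖
        = ((marginal d αt σt q x)⁻¹ * (gaussDensity d (αt • x₁) σt x * q x₁) * ‖x₁‖) *
            |(⟪x₁ - denoiser d αt σt q x, v⟫ : ℝ)| := by ring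
      _ ≤ ((marginal d αt σt q x)⁻¹ * (gaussDensity d (αt • x₁) σt x * q x₁) * ‖x₁‖) *
            ((‖x₁‖ + ‖denoiser d αt σt q x‖) * ‖v‖) := mul_le_mul_of_nonneg_left h1 c0
      _ = (marginal d αt σt q x)⁻¹ * ‖v‖ *
            (gaussDensity d (αt • x₁) σt x * q x₁ * ‖x₁‖ ^ 2)
          + (marginal d αt σt q x)⁻¹ * ‖v‖ * ‖denoiser d αt σt q x‖ *
            (gaussDensity d (αt • x₁) σt x * q x₁ * ‖x₁‖) := by ring
  have J2 : ∀ v : EuclideanSpace ℝ (Fin d),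
      Integrable fun x₁ => (posterior d αt σt q x₁ x * ⟪x₁ - denoiser d αt σt q x, v⟫) •
        denoiser d αt σt q x :=
    fun v => (Ja v).smul_const _
  have Juu : ∀ v : EuclideanSpace ℝ (Fin d),
      Integrable fun x₁ => (posterior d αt σt q x₁ x * ⟪x₁ - denoiser d αt σt q x, v⟫) •
        (x₁ - denoiser d αt σt q x) := by
    intro v
    have heq : (fun x₁ => (posterior d αt σt q x₁ x * ⟪x₁ - denoiser d αt σt q x, v⟫) •
          (x₁ - denoiser d αt σt q x))
        = fun x₁ => (posterior d αt σt q x₁ x * ⟪x₁ - denoiser d αt σt q x, v⟫) • x₁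
            - (posterior d αt σt q x₁ x * ⟪x₁ - denoiser d αt σt q x, v⟫) •
              denoiser d αt σt q x := by
      funext x₁
      rw [smul_sub]
    rw [heq]
    exact (J1 v).sub (J2 v)
  have hIa0 : ∀ v : EuclideanSpace ℝ (Fin d),
      (∫ x₁, posterior d αt σt q x₁ x * ⟪x₁ - denoiser d αt σt q x, v⟫) = 0 := by
    intro v
    have hsplit : (fun x₁ => posterior d αt σt q x₁ x * ⟪x₁ - denoiser d αt σt q x, v⟫)
        = fun x₁ => posterior d αt σt q x₁ x * ⟪x₁, v⟫
            - posterior d αt σt q x₁ x * ⟪denoiser d αt σt q x, v⟫ := by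
      funext x₁
      rw [inner_sub_left]
      ring
    rw [hsplit, integral_sub (Js1 v) (Js2 v)]
    have h1 : (∫ x₁, posterior d αt σt q x₁ x * ⟪x₁, v⟫) = ⟪v, denoiser d αt σt q x⟫ := by
      have h2 := integral_inner (𝕜 := ℝ) Jpx v
      have h3 : (fun x₁ => (⟪v, posterior d αt σt q x₁ x • x₁⟫ : ℝ))
          = fun x₁ => posterior d αt σt q x₁ x * ⟪x₁, v⟫ := by
        funext x₁
        rw [real_inner_smul_right, real_inner_comm]
      rw [h3] at h2
      exact h2
    have h4 : (∫ x₁, posterior d αt σt q x₁ x * ⟪denoiser d αt σt q x, v⟫)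
        = ⟪denoiser d αt σt q x, v⟫ := by
      rw [integral_mul_const, hP1, one_mul]
    rw [h1, h4, real_inner_comm, sub_self]
  -- main formula
  have key : ∀ v : EuclideanSpace ℝ (Fin d),
      fderiv ℝ (denoiser d αt σt q) x v
        = (αt / σt ^ 2) •
            ∫ x₁, (posterior d αt σt q x₁ x * ⟪x₁ - denoiser d αt σt q x, v⟫) •
              (x₁ - denoiser d αt σt q x) := by
    intro v
    rw [hswap v]
    have h1 : (fun x₁ => (⟪gradient (fun z => posterior d αt σt q x₁ z) x, v⟫ : ℝ) • x₁)
        = fun x₁ => (αt / σt ^ 2) •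
            ((posterior d αt σt q x₁ x * ⟪x₁ - denoiser d αt σt q x, v⟫) • x₁) := by
      funext x₁
      rw [hgrad x₁, real_inner_smul_left, real_inner_smul_left, mul_smul]
    rw [h1, integral_smul]
    congr 1
    have h2 : (fun x₁ => (posterior d αt σt q x₁ x * ⟪x₁ - denoiser d αt σt q x, v⟫) •
          (x₁ - denoiser d αt σt q x))
        = fun x₁ => (posterior d αt σt q x₁ x * ⟪x₁ - denoiser d αt σt q x, v⟫) • x₁
            - (posterior d αt σt q x₁ x * ⟪x₁ - denoiser d αt σt q x, v⟫) •
              denoiser d αt σt q x := by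
      funext x₁
      rw [smul_sub]
    rw [h2, integral_sub (J1 v) (J2 v), integral_smul_const, hIa0 v, zero_smul, sub_zero]
  have hinner : ∀ v w : EuclideanSpace ℝ (Fin d),
      (⟪fderiv ℝ (denoiser d αt σt q) x v, w⟫ : ℝ)
        = (αt / σt ^ 2) * ∫ x₁, posterior d αt σt q x₁ x *
            ⟪x₁ - denoiser d αt σt q x, v⟫ * ⟪x₁ - denoiser d αt σt q x, w⟫ := by
    intro v w
    rw [key v, real_inner_smul_left]
    congr 1
    rw [real_inner_comm, ← integral_inner (𝕜 := ℝ) (Juu v) w]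
    congr 1
    funext x₁
    rw [real_inner_smul_right, real_inner_comm w (x₁ - denoiser d αt σt q x)]
  refine ⟨key, ?_, ?_⟩
  · intro v w
    have hwv := hinner w v
    rw [real_inner_comm v (fderiv ℝ (denoiser d αt σt q) x w)] at hwv
    rw [hinner v w, hwv]
    congr 1
    apply integral_congr_ae
    filter_upwards with x₁
    ring
  · intro v
    rw [hinner v v]
    apply mul_nonneg (div_nonneg hα.le hσ2.le)
    apply integral_nonneg
    intro x₁
    have h := hpn x₁
    have h2 := mul_self_nonneg (⟪x₁ - denoiser d αt σt q x, v⟫ : ℝ)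
    simp only [Pi.zero_apply]
    nlinarith
end
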